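/- Let t ≥ 2 be an integer, and let A and B be finite families of axis-parallel rectangles in the plane such that A ∪ B is in general position. Suppose the bipartite intersection graph G_{A,B} is K_{t,t}-free. Let P be the set of all corner points of rectangles in A. Then the bipartite incidence graph with vertex sets P and B, having an edge (p, b) whenever p ∈ b, is K_{4t−3,4t−3}-free. -/

import Mathlib

open scoped Classical
open Finset

/-- An axis-parallel rectangle `[x₁,x₂] × [y₁,y₂]` with `x₁ < x₂` and `y₁ < y₂`. -/
structure Rect where
  x1 : ℝ
  x2 : ℝ
  y1 : ℝ
  y2 : ℝ
  hx : x1 < x2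
  hy : y1 < y2

/-- The set of points of an axis-parallel rectangle. -/
def Rect.toSet (r : Rect) : Set (ℝ × ℝ) :=
  Set.Icc r.x1 r.x2 ×ˢ Set.Icc r.y1 r.y2

/-- The four corner points of an axis-parallel rectangle. -/
noncomputable def Rect.corners (r : Rect) : Finset (ℝ × ℝ) :=
  {(r.x1, r.y1), (r.x1, r.y2), (r.x2, r.y1), (r.x2, r.y2)}

/-- A family of axis-parallel rectangles is in general position if the x-coordinates of all
vertical edges are pairwise distinct and the y-coordinates of all horizontal edges are
pairwise distinct. -/
def GenPos (F : Finset Rect) : Prop :=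
  ∀ r ∈ F, ∀ s ∈ F, r ≠ s →
    ({r.x1, r.x2} ∩ {s.x1, s.x2} : Set ℝ) = ∅ ∧
    ({r.y1, r.y2} ∩ {s.y1, s.y2} : Set ℝ) = ∅

lemma corners_mem_toSet (r : Rect) : ∀ p ∈ r.corners, p ∈ r.toSet := by
  intro p hp
  have hx := r.hx.le
  have hy := r.hy.le
  simp only [Rect.corners, Finset.mem_insert, Finset.mem_singleton] at hp
  rcases hp with h | h | h | h <;> subst h <;>
    simp [Rect.toSet, Set.mem_Icc, le_refl, hx, hy]

lemma corners_card_le (r : Rect) : r.corners.card ≤ 4 := by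
  have h1 := Finset.card_insert_le (r.x1, r.y1)
    ({(r.x1, r.y2), (r.x2, r.y1), (r.x2, r.y2)} : Finset (ℝ × ℝ))
  have h2 := Finset.card_insert_le (r.x1, r.y2)
    ({(r.x2, r.y1), (r.x2, r.y2)} : Finset (ℝ × ℝ))
  have h3 := Finset.card_insert_le (r.x2, r.y1)
    ({(r.x2, r.y2)} : Finset (ℝ × ℝ))
  have h4 : ({(r.x2, r.y2)} : Finset (ℝ × ℝ)).card = 1 := Finset.card_singleton _
  unfold Rect.corners
  omega

theorem stmt_11 (t : ℕ) (ht : 2 ≤ t) (A B : Finset Rect)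
    (hgp : GenPos (A ∪ B))
    (hfree : ¬ ∃ (S T : Finset Rect), S ⊆ A ∧ T ⊆ B ∧ S.card = t ∧ T.card = t ∧
      ∀ a ∈ S, ∀ b ∈ T, (a.toSet ∩ b.toSet).Nonempty) :
    ¬ ∃ (S : Finset (ℝ × ℝ)) (T : Finset Rect),
      S ⊆ A.biUnion Rect.corners ∧ T ⊆ B ∧
      S.card = 4 * t - 3 ∧ T.card = 4 * t - 3 ∧
      ∀ p ∈ S, ∀ b ∈ T, p ∈ b.toSet := by
  rintro ⟨S, T, hSA, hTB, hScard, hTcard, hmem⟩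
  set U := A.filter (fun a => ∃ p ∈ S, p ∈ a.corners) with hUdef
  have hSsub : S ⊆ U.biUnion Rect.corners := by
    intro p hp
    obtain ⟨a, haA, hpc⟩ := Finset.mem_biUnion.1 (hSA hp)
    exact Finset.mem_biUnion.2 ⟨a, Finset.mem_filter.2 ⟨haA, p, hp, hpc⟩, hpc⟩
  have hcard4 : S.card ≤ 4 * U.card := by
    calc S.card ≤ (U.biUnion Rect.corners).card := Finset.card_le_card hSsub
      _ ≤ ∑ a ∈ U, (Rect.corners a).card := Finset.card_biUnion_le
      _ ≤ ∑ _a ∈ U, 4 := Finset.sum_le_sum (fun a _ => corners_card_le a)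
      _ = 4 * U.card := by rw [Finset.sum_const, smul_eq_mul, mul_comm]
  have htU : t ≤ U.card := by omega
  have htT : t ≤ T.card := by omega
  obtain ⟨U', hU'U, hU'card⟩ := Finset.exists_subset_card_eq htU
  obtain ⟨T', hT'T, hT'card⟩ := Finset.exists_subset_card_eq htT
  exact hfree ⟨U', T', hU'U.trans (Finset.filter_subset _ _), hT'T.trans hTB,
    hU'card, hT'card, by
      intro a ha b hb
      obtain ⟨_, p, hpS, hpc⟩ := Finset.mem_filter.1 (hU'U ha)
      exact ⟨p, corners_mem_toSet a p hpc, hmem p hpS b (hT'T hb)⟩⟩
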